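/- For a filter F on ω, the following are equivalent: (1) F is hereditarily meager; (2) for each sequence ⟨X_i : i ∈ ω⟩ of subsets of ω such that ⋃_i X_i ∈ F⁺ and ω∖X_i ∈ F for every i, there exists a strictly increasing sequence n₀ < n₁ < ⋯ such that for every Y ∈ F and all but finitely many k, Y ∩ ⋃_{i ∈ [n_k, n_{k+1})} X_i ≠ ∅; (3) for each sequence ⟨X_i : i ∈ ω⟩ of subsets of ω such that ⋃_i X_i ∈ F, ⋃_{i<k} X_i ∉ F for every k, and only finitely many X_i belong to F⁺, there exists a strictly increasing sequence n₀ < n₁ < ⋯ such that for every Y ∈ F and all but finitely many k, Y ∩ ⋃_{i ∈ [n_k, n_{k+1})} X_i ≠ ∅. -/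

import Mathlib

open Set Filter

/-- The characteristic function of a set, viewing `𝒫(α)` inside the Cantor space `α → Bool`. -/
noncomputable def chi {α : Type*} (X : Set α) : α → Bool :=
  fun n => @decide (n ∈ X) (Classical.propDecidable _)

/-- A family of subsets of `α` viewed as a subset of the Cantor space `α → Bool`. -/
noncomputable def toCantor {α : Type*} (A : Set (Set α)) : Set (α → Bool) := chi '' A

/-- A family of subsets of `α` is meager if it is meager as a subset of the Cantor space. -/
def MeagerFamily {α : Type*} (A : Set (Set α)) : Prop := IsMeagre (toCantor A)

/-- A family of subsets of `α` has the Baire property if, viewed in the Cantor space,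
it differs from an open set by a meager set. -/
def HasBP {α : Type*} (A : Set (Set α)) : Prop :=
  ∃ U : Set (α → Bool), IsOpen U ∧ IsMeagre (symmDiff (toCantor A) U)

/-- `A` has the Baire property relative to `C ⊆ 2^α`: the trace of `A` on `C` differs from a
relatively open subset of `C` by a set meager in `C`. -/
def RelBP {α : Type*} (A : Set (Set α)) (C : Set (α → Bool)) : Prop :=
  ∃ O : Set C, IsOpen O ∧ IsMeagre (symmDiff (Subtype.val ⁻¹' (toCantor A)) O)

/-- Talagrand's strong Baire property: the filter has the Baire property relative to
every closed subset of the Cantor space. -/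
def StrongBP {α : Type*} (F : Filter α) : Prop :=
  ∀ C : Set (α → Bool), IsClosed C → RelBP F.sets C

/-- `F⁺`: the sets whose complement is not in `F`, i.e. the sets compatible with `F`. -/
def Fplus {α : Type*} (F : Filter α) : Set (Set α) := {X | Xᶜ ∉ F}

/-- `F` is completely meager if for every `X ∈ F⁺` the filter generated by `F ∪ {X}` is meager. -/
def CompletelyMeager {α : Type*} (F : Filter α) : Prop :=
  ∀ X ∈ Fplus F, MeagerFamily (F ⊓ 𝓟 X).sets

/-- `F` is weakly hereditarily meager if for every `f`, either some fiber `f⁻¹(i)` is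
compatible with `F`, or the image filter `f(F)` is meager. -/
def WeaklyHereditarilyMeager {α : Type*} (F : Filter α) : Prop :=
  ∀ f : α → ℕ, (∃ i : ℕ, f ⁻¹' {i} ∈ Fplus F) ∨ MeagerFamily (Filter.map f F).sets

/-- `F` is hereditarily meager if for every `f`, the image filter `f(F)` either contains
a finite set (is improper) or is meager. -/
def HereditarilyMeager {α : Type*} (F : Filter α) : Prop :=
  ∀ f : α → ℕ, (∃ Y ∈ Filter.map f F, Y.Finite) ∨ MeagerFamily (Filter.map f F).sets

/-- `F` is a P⁺-filter: every ⊆*-decreasing sequence from `F⁺` has a pseudo-intersection in `F⁺`. -/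
def PPlusFilter {α : Type*} (F : Filter α) : Prop :=
  ∀ X : ℕ → Set α, (∀ n, X n ∈ Fplus F) → (∀ n, (X (n + 1) \ X n).Finite) →
    ∃ Y ∈ Fplus F, ∀ n, (Y \ X n).Finite

/-- `F` is a strong P⁺-filter: for every sequence from `F⁺` there is `f : ω → ω` such that
every `Y ∈ F` meets `Xₙ ∩ [0, f(n))` for all but finitely many `n`. -/
def StrongPPlusFilter (F : Filter ℕ) : Prop :=
  ∀ X : ℕ → Set ℕ, (∀ n, X n ∈ Fplus F) →
    ∃ f : ℕ → ℕ, ∀ Y ∈ F, ∀ᶠ n in Filter.atTop, (Y ∩ X n ∩ Set.Iio (f n)).Nonempty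

/-- `F` is an Fσ filter: as a subset of Cantor space it is a countable union of closed sets. -/
def IsFsigmaFilter (F : Filter ℕ) : Prop :=
  ∃ C : ℕ → Set (ℕ → Bool), (∀ n, IsClosed (C n)) ∧ toCantor F.sets = ⋃ n, C n

/-- An almost disjoint family: an infinite family of infinite sets with pairwise finite
intersections. -/
def ADFamily (𝒜 : Set (Set ℕ)) : Prop :=
  𝒜.Infinite ∧ (∀ A ∈ 𝒜, A.Infinite) ∧
    ∀ A ∈ 𝒜, ∀ B ∈ 𝒜, A ≠ B → (A ∩ B).Finite

/-- A maximal almost disjoint family. -/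
def MadFamily (𝒜 : Set (Set ℕ)) : Prop :=
  ADFamily 𝒜 ∧ ∀ X : Set ℕ, X.Infinite → ∃ A ∈ 𝒜, (X ∩ A).Infinite

/-- `F(𝒜)`: the filter generated by the complements of members of `𝒜` and the cofinite sets. -/
def madFilter (𝒜 : Set (Set ℕ)) : Filter ℕ :=
  Filter.cofinite ⊓ ⨅ A ∈ 𝒜, 𝓟 Aᶜ

/-- `I(𝒜)`: the ideal generated by `𝒜`, i.e. sets covered by finitely many members of `𝒜`
together with a finite set. -/
def madIdeal (𝒜 : Set (Set ℕ)) : Set (Set ℕ) :=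
  {X | ∃ s : Finset (Set ℕ), ↑s ⊆ 𝒜 ∧ (X \ ⋃ A ∈ s, (A : Set ℕ)).Finite}

/-- The Fubini product `F ⊗ G` of two filters. -/
def tensor {α β : Type*} (F : Filter α) (G : Filter β) : Filter (α × β) where
  sets := {X | {n | {m | (n, m) ∈ X} ∈ G} ∈ F}
  univ_sets := by simp
  sets_of_superset := by
    intro X Y hX hXY
    simp only [Set.mem_setOf_eq] at *
    filter_upwards [hX] with n hn
    filter_upwards [hn] with m hm
    exact hXY hm
  inter_sets := by
    intro X Y hX hY
    simp only [Set.mem_setOf_eq] at *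
    filter_upwards [hX, hY] with n h1 h2
    filter_upwards [h1, h2] with m hm1 hm2
    exact ⟨hm1, hm2⟩

/-- A dominating family of functions. -/
def Dominating (D : Set (ℕ → ℕ)) : Prop :=
  ∀ g : ℕ → ℕ, ∃ f ∈ D, ∀ᶠ n in Filter.atTop, g n ≤ f n

/-- The dominating number `𝔡`. -/
noncomputable def frakD : Cardinal :=
  sInf {c : Cardinal | ∃ D : Set (ℕ → ℕ), Dominating D ∧ Cardinal.mk D = c}

section AuxHM

lemma cyl_mem_nhds {U : Set (ℕ → Bool)} {y : ℕ → Bool} (hU : U ∈ nhds y) :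
    ∃ q : ℕ, ∀ x : ℕ → Bool, (∀ i < q, x i = y i) → x ∈ U := by
  rw [nhds_pi, Filter.mem_pi] at hU
  obtain ⟨I, hIfin, t, ht, hsub⟩ := hU
  obtain ⟨b, hb⟩ := hIfin.bddAbove
  refine ⟨b + 1, fun x hx => hsub fun i hi => ?_⟩
  have : x i = y i := hx i (Nat.lt_succ_of_le (hb hi))
  rw [this]
  have := ht i
  rwa [nhds_discrete, Filter.mem_pure] at this

lemma cyl_isOpen (q : ℕ) (y : ℕ → Bool) : IsOpen {x : ℕ → Bool | ∀ i < q, x i = y i} := by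
  have : {x : ℕ → Bool | ∀ i < q, x i = y i}
      = ⋂ i ∈ Finset.range q, (fun x : ℕ → Bool => x i) ⁻¹' {y i} := by
    ext x; simp [Finset.mem_range]
  rw [this]
  exact isOpen_biInter_finset fun i _ => (continuous_apply i).isOpen_preimage _ (isOpen_discrete _)

lemma chi_eq_true {Y : Set ℕ} {j : ℕ} (h : j ∈ Y) : chi Y j = true := by
  simp [chi, h]

/-- Escape a closed set with empty interior beyond any finite condition. -/
lemma escape {C : Set (ℕ → Bool)} (hC : IsClosed C) (hint : interior C = ∅)
    (p : ℕ) (t : Fin p → Bool) :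
    ∃ q, p < q ∧ ∃ u : ℕ → Bool, (∀ i : ℕ, ∀ h : i < p, u i = t ⟨i, h⟩) ∧
      ∀ x : ℕ → Bool, (∀ i < q, x i = u i) → x ∉ C := by
  set t' : ℕ → Bool := fun i => if h : i < p then t ⟨i, h⟩ else false with ht'
  have hV : IsOpen {x : ℕ → Bool | ∀ i < p, x i = t' i} := cyl_isOpen p t'
  have hne : ¬ ({x : ℕ → Bool | ∀ i < p, x i = t' i} ⊆ C) := by
    intro hsub
    have h2 : {x : ℕ → Bool | ∀ i < p, x i = t' i} ⊆ interior C :=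
      hV.subset_interior_iff.mpr hsub
    have h3 : t' ∈ interior C := h2 (fun i _ => rfl)
    simp [hint] at h3
  obtain ⟨y, hy, hyC⟩ := not_subset.mp hne
  have : Cᶜ ∈ nhds y := hC.isOpen_compl.mem_nhds hyC
  obtain ⟨q, hq⟩ := cyl_mem_nhds this
  refine ⟨max q (p + 1), lt_of_lt_of_le (Nat.lt_succ_self p) (le_max_right _ _), y,
    fun i h => by rw [hy i h, ht']; simp [h],
    fun x hx => hq x fun i hi => hx i (lt_of_lt_of_le hi (le_max_left _ _))⟩

lemma nwd_union_closed {X : Type*} [TopologicalSpace X] {s t : Set X}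
    (hs : IsClosed s ∧ IsNowhereDense s) (ht : IsClosed t ∧ IsNowhereDense t) :
    IsClosed (s ∪ t) ∧ IsNowhereDense (s ∪ t) := by
  rw [isClosed_isNowhereDense_iff_compl] at *
  rw [Set.compl_union]
  exact ⟨hs.1.inter ht.1, hs.2.inter_of_isOpen_left ht.2 hs.1⟩

/-- iterate for interval endpoints -/
noncomputable def natRecFun (f : ℕ → ℕ → ℕ) : ℕ → ℕ
  | 0 => 0
  | k+1 => f k (natRecFun f k)

/-- iterate for the patched point of Cantor space -/
noncomputable def patchSeq (z0 : ℕ → Bool) (step : ℕ → (ℕ → Bool) → (ℕ → Bool)) :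
    ℕ → (ℕ → Bool)
  | 0 => z0
  | k+1 => step k (patchSeq z0 step k)


/-- The set of characteristic functions hitting every interval `[n k, n (k+1))` for `k ≥ m`
is closed and nowhere dense. -/
lemma hitSet_nwd (n : ℕ → ℕ) (hn : StrictMono n) (m : ℕ) :
    IsNowhereDense {x : ℕ → Bool | ∀ k, m ≤ k → ∃ i, n k ≤ i ∧ i < n (k+1) ∧ x i = true} := by
  set E := {x : ℕ → Bool | ∀ k, m ≤ k → ∃ i, n k ≤ i ∧ i < n (k+1) ∧ x i = true} with hE
  have hclosed : IsClosed E := by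
    have : E = ⋂ k ∈ {k | m ≤ k}, ⋃ i ∈ Set.Ico (n k) (n (k+1)), {x : ℕ → Bool | x i = true} := by
      ext x; simp [hE, Set.mem_Ico, and_assoc]
    rw [this]
    refine isClosed_biInter fun k _ => Set.Finite.isClosed_biUnion (Set.finite_Ico _ _) fun i _ => ?_
    show IsClosed ((fun x : ℕ → Bool => x i) ⁻¹' {true})
    exact IsClosed.preimage (continuous_apply i) (isClosed_discrete ({true} : Set Bool))
  rw [hclosed.isNowhereDense_iff]
  by_contra h
  obtain ⟨y, hy⟩ := Set.nonempty_iff_ne_empty.mpr h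
  obtain ⟨q, hq⟩ := cyl_mem_nhds (isOpen_interior.mem_nhds hy)
  set k := max m q with hk
  set x : ℕ → Bool := fun i => if i < q then y i else false with hx
  have hxE : x ∈ E := interior_subset (hq x fun i hi => by simp [hx, hi])
  obtain ⟨i, hi1, _, hi3⟩ := hxE k (le_max_left _ _)
  have hiq : ¬ i < q := by
    intro hlt
    exact absurd hi1 (not_le.mpr (lt_of_lt_of_le hlt (le_trans (le_max_right m q) (hn.le_apply))))
  simp [hx, hiq] at hi3

/-- Easy direction of Talagrand's characterization. -/
lemma talagrand_easy (G : Filter ℕ) (n : ℕ → ℕ) (hn : StrictMono n)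
    (h : ∀ Y ∈ G, ∀ᶠ k in Filter.atTop, (Y ∩ Set.Ico (n k) (n (k+1))).Nonempty) :
    MeagerFamily G.sets := by
  rw [MeagerFamily, isMeagre_iff_countable_union_isNowhereDense]
  refine ⟨Set.range (fun m => {x : ℕ → Bool | ∀ k, m ≤ k → ∃ i, n k ≤ i ∧ i < n (k+1) ∧ x i = true}),
    ?_, Set.countable_range _, ?_⟩
  · rintro t ⟨m, rfl⟩; exact hitSet_nwd n hn m
  · rintro x ⟨Y, hY, rfl⟩
    obtain ⟨m, hm⟩ := (Filter.eventually_atTop).mp (h Y hY)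
    refine Set.mem_sUnion.mpr ⟨_, ⟨m, rfl⟩, fun k hk => ?_⟩
    obtain ⟨j, hjY, hj1, hj2⟩ := hm k hk
    exact ⟨j, hj1, hj2, chi_eq_true hjY⟩

/-- Hard direction of Talagrand's characterization: a meager filter admits an interval
partition such that every member meets all but finitely many intervals. -/
lemma talagrand_hard (G : Filter ℕ) (hm : MeagerFamily G.sets) :
    ∃ n : ℕ → ℕ, StrictMono n ∧
      ∀ Y ∈ G, ∀ᶠ k in Filter.atTop, (Y ∩ Set.Ico (n k) (n (k+1))).Nonempty := by
  classical
  rw [MeagerFamily, isMeagre_iff_countable_union_isNowhereDense] at hm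
  obtain ⟨S, hSnwd, hScount, hScover⟩ := hm
  obtain ⟨D, hD⟩ := (hScount.insert ∅).exists_eq_range (Set.insert_nonempty _ _)
  have hDnwd : ∀ i, IsNowhereDense (D i) := by
    intro i
    have : D i ∈ insert ∅ S := hD ▸ Set.mem_range_self i
    rcases this with h | h
    · rw [h]; exact isNowhereDense_empty
    · exact hSnwd _ h
  -- closed nowhere dense increasing hull
  set C : ℕ → Set (ℕ → Bool) := fun m => closure (⋃ i ∈ Finset.range (m+1), D i) with hC
  have hCclosed : ∀ m, IsClosed (C m) := fun m => isClosed_closure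
  have hCnwd : ∀ m, IsNowhereDense (C m) := by
    intro m
    have key : ∀ m, IsClosed (closure (⋃ i ∈ Finset.range (m+1), D i)) ∧
        IsNowhereDense (closure (⋃ i ∈ Finset.range (m+1), D i)) := by
      intro m
      induction m with
      | zero =>
          constructor
          · exact isClosed_closure
          · have : (⋃ i ∈ Finset.range 1, D i) = D 0 := by simp
            rw [this]; exact (hDnwd 0).closure
      | succ m ih =>
          have hstep : (⋃ i ∈ Finset.range (m+2), D i)
              = (⋃ i ∈ Finset.range (m+1), D i) ∪ D (m+1) := by
            ext x; simp [Finset.mem_range, Nat.lt_succ_iff_lt_or_eq]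
          have h1 : IsNowhereDense (closure (⋃ i ∈ Finset.range (m+1), D i) ∪ closure (D (m+1))) :=
            (nwd_union_closed ih ⟨isClosed_closure, (hDnwd (m+1)).closure⟩).2
          constructor
          · exact isClosed_closure
          · have hsub : closure (⋃ i ∈ Finset.range (m+2), D i)
                ⊆ closure (⋃ i ∈ Finset.range (m+1), D i) ∪ closure (D (m+1)) := by
              rw [hstep]
              refine closure_minimal (Set.union_subset_union subset_closure subset_closure) ?_
              exact (isClosed_closure.union isClosed_closure)
            rw [IsNowhereDense] at h1 ⊢
            rw [closure_closure]
            have : closure (closure (⋃ i ∈ Finset.range (m+2), D i))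
                ⊆ closure (⋃ i ∈ Finset.range (m+1), D i) ∪ closure (D (m+1)) := by
              rw [closure_closure]; exact hsub
            refine Set.eq_empty_of_subset_empty ?_
            calc interior (closure (⋃ i ∈ Finset.range (m+2), D i))
                ⊆ interior (closure (closure (⋃ i ∈ Finset.range (m+1), D i) ∪ closure (D (m+1)))) := by
                  apply interior_mono; exact hsub.trans subset_closure
              _ = ∅ := h1
    exact (key m).2
  have hCint : ∀ m, interior (C m) = ∅ := fun m => ((hCclosed m).isNowhereDense_iff).mp (hCnwd m)
  have hCmono : ∀ {m k}, m ≤ k → C m ⊆ C k := by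
    intro m k hmk
    apply closure_mono
    apply Set.biUnion_subset_biUnion_left
    intro i hi
    exact Finset.mem_range.mpr (lt_of_lt_of_le (Finset.mem_range.mp hi) (by omega))
  have hcover : toCantor G.sets ⊆ ⋃ m, C m := by
    intro x hx
    obtain ⟨s, hsS, hxs⟩ := hScover hx
    have : s ∈ Set.range D := by rw [← hD]; exact Set.mem_insert_iff.mpr (Or.inr hsS)
    obtain ⟨i, rfl⟩ := this
    exact Set.mem_iUnion.mpr ⟨i, subset_closure (Set.mem_biUnion (Finset.self_mem_range_succ i) hxs)⟩
  -- choice of escapes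
  have key : ∀ (m p : ℕ) (t : Fin p → Bool), ∃ q, p < q ∧ ∃ u : ℕ → Bool,
      (∀ i : ℕ, ∀ h : i < p, u i = t ⟨i, h⟩) ∧
      ∀ x : ℕ → Bool, (∀ i < q, x i = u i) → x ∉ C m :=
    fun m p t => escape (hCclosed m) (hCint m) p t
  choose q hq u hu1 hu2 using key
  set N : ℕ → ℕ := natRecFun (fun k p => Finset.univ.sup (q k p)) with hN
  have hNsucc : ∀ k, N (k+1) = Finset.univ.sup (q k (N k)) := fun k => rfl
  have hqle : ∀ k (t : Fin (N k) → Bool), q k (N k) t ≤ N (k+1) := by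
    intro k t; rw [hNsucc]; exact Finset.le_sup (Finset.mem_univ t)
  have hlt : ∀ k, N k < N (k+1) := by
    intro k
    exact lt_of_lt_of_le (hq k (N k) (fun _ => false)) (hqle k _)
  have hNmono : StrictMono N := strictMono_nat_of_lt_succ hlt
  refine ⟨N, hNmono, ?_⟩
  intro Y hY
  by_contra hev
  -- the set of missed intervals is unbounded
  have hfreq : ∀ a, ∃ k, a ≤ k ∧ (Y ∩ Set.Ico (N k) (N (k+1))) = ∅ := by
    have := Filter.not_eventually.mp hev
    intro a
    obtain ⟨k, hk1, hk2⟩ := (Filter.frequently_atTop.mp this) a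
    exact ⟨k, hk1, Set.not_nonempty_iff_eq_empty.mp hk2⟩
  -- the patched sequence
  set s : ℕ → (ℕ → Bool) := patchSeq (chi Y) (fun k ih j =>
    if N k ≤ j ∧ j < N (k+1) ∧ (Y ∩ Set.Ico (N k) (N (k+1))) = ∅
    then u k (N k) (fun i => ih i) j else ih j) with hs
  have hssucc : ∀ k j, s (k+1) j =
      if N k ≤ j ∧ j < N (k+1) ∧ (Y ∩ Set.Ico (N k) (N (k+1))) = ∅
      then u k (N k) (fun i : Fin (N k) => s k i) j else s k j := fun k j => rfl
  -- stabilization below N k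
  have hstab : ∀ k m, k ≤ m → ∀ j, j < N k → s m j = s k j := by
    intro k m hkm
    induction m with
    | zero => intro j hj; have : k = 0 := Nat.le_zero.mp hkm; rw [this]
    | succ m ih =>
        intro j hj
        rcases Nat.lt_or_ge k (m+1) with h | h
        · have hkm' : k ≤ m := Nat.lt_succ_iff.mp h
          have hjm : j < N m := lt_of_lt_of_le hj (hNmono.monotone hkm')
          rw [hssucc]
          have : ¬ (N m ≤ j ∧ j < N (m+1) ∧ (Y ∩ Set.Ico (N m) (N (m+1))) = ∅) := by
            rintro ⟨h1, -, -⟩; omega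
          rw [if_neg this]
          exact ih hkm' j hj
        · have : k = m + 1 := le_antisymm hkm h
          rw [this]
  -- Y is preserved
  have hYpres : ∀ k j, j ∈ Y → s k j = true := by
    intro k
    induction k with
    | zero => intro j hj; exact chi_eq_true hj
    | succ k ih =>
        intro j hj
        rw [hssucc]
        by_cases h : N k ≤ j ∧ j < N (k+1) ∧ (Y ∩ Set.Ico (N k) (N (k+1))) = ∅
        · exfalso
          obtain ⟨h1, h2, h3⟩ := h
          exact absurd h3 (Set.nonempty_iff_ne_empty.mp ⟨j, hj, h1, h2⟩)
        · rw [if_neg h]; exact ih j hj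
  set Z : ℕ → Bool := fun j => s (j+1) j with hZ
  have hZagree : ∀ k j, j < N k → Z j = s k j := by
    intro k j hj
    rcases le_or_gt k (j+1) with h | h
    · exact hstab k (j+1) h j hj
    · have hj' : j < N (j+1) := lt_of_lt_of_le (Nat.lt_succ_self j) (hNmono.le_apply)
      exact (hstab (j+1) k (Nat.le_of_lt h) j hj').symm
  -- Z escapes C k for every missed interval k
  have hZesc : ∀ k, (Y ∩ Set.Ico (N k) (N (k+1))) = ∅ → Z ∉ C k := by
    intro k hk
    apply hu2 k (N k) (fun i : Fin (N k) => s k i)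
    intro i hi
    rcases Nat.lt_or_ge i (N k) with h | h
    · rw [hZagree k i h]
      exact (hu1 k (N k) (fun i : Fin (N k) => s k i) i h).symm
    · have hiN : i < N (k+1) := lt_of_lt_of_le hi (hqle k _)
      rw [hZagree (k+1) i hiN, hssucc]
      rw [if_pos ⟨h, hiN, hk⟩]
  -- Z corresponds to a member of G
  have hZmem : Z ∈ toCantor G.sets := by
    refine ⟨{j | Z j = true}, ?_, ?_⟩
    · exact G.sets_of_superset hY (fun j hj => hYpres (j+1) j hj)
    · funext j
      by_cases h : Z j <;> simp [chi, Set.mem_setOf_eq, h]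
  obtain ⟨m, hmem⟩ := Set.mem_iUnion.mp (hcover hZmem)
  obtain ⟨k, hk1, hk2⟩ := hfreq m
  exact hZesc k hk2 (hCmono hk1 hmem)


variable (F : Filter ℕ)

lemma impl12 (h : HereditarilyMeager F) :
    ∀ X : ℕ → Set ℕ, (⋃ i, X i) ∈ Fplus F → (∀ i, (X i)ᶜ ∈ F) →
      ∃ n : ℕ → ℕ, StrictMono n ∧
        ∀ Y ∈ F, ∀ᶠ k in Filter.atTop,
          (Y ∩ ⋃ i ∈ Set.Ico (n k) (n (k + 1)), X i).Nonempty := by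
  intro X h1 h2
  classical
  simp only [Fplus, Set.mem_setOf_eq] at h1
  set f : ℕ → ℕ := fun m => if h : ∃ i, m ∈ X i then Nat.find h + 1 else 0 with hf
  have hnofin : ¬ ∃ Y ∈ Filter.map f F, Y.Finite := by
    rintro ⟨Y, hYmem, hYfin⟩
    rw [Filter.mem_map] at hYmem
    set S : Finset ℕ := hYfin.toFinset.image (· - 1) with hS
    have hT : (f ⁻¹' Y ∩ ⋂ i ∈ S, (X i)ᶜ) ∈ F :=
      Filter.inter_mem hYmem ((Filter.biInter_finset_mem S).mpr (fun i _ => h2 i))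
    apply h1
    refine F.sets_of_superset hT ?_
    rintro m ⟨hm1, hm2⟩ hmem
    obtain ⟨i, hi⟩ := Set.mem_iUnion.mp hmem
    have hex : ∃ i, m ∈ X i := ⟨i, hi⟩
    have hfm : f m = Nat.find hex + 1 := by rw [hf]; simp only [dif_pos hex]
    have hfS : Nat.find hex ∈ S := by
      refine Finset.mem_image.mpr ⟨f m, ?_, by omega⟩
      exact hYfin.mem_toFinset.mpr hm1
    have := Set.mem_iInter₂.mp hm2 _ hfS
    exact this (Nat.find_spec hex)
  have hmeag : MeagerFamily (Filter.map f F).sets := (h f).resolve_left hnofin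
  obtain ⟨n, hn, hhit⟩ := talagrand_hard (Filter.map f F) hmeag
  have hpos : ∀ k, 1 ≤ n (k + 1) := fun k =>
    le_trans (Nat.one_le_iff_ne_zero.mpr (Nat.succ_ne_zero k)) hn.le_apply
  refine ⟨fun k => n (k + 1) - 1, ?_, ?_⟩
  · intro a b hab
    show n (a + 1) - 1 < n (b + 1) - 1
    have h1 := hn (show a + 1 < b + 1 by omega)
    have := hpos a
    omega
  · intro Y hY
    have hfY : f '' Y ∈ Filter.map f F := Filter.image_mem_map hY
    rw [Filter.eventually_atTop]
    obtain ⟨a, ha⟩ := Filter.eventually_atTop.mp (hhit _ hfY)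
    refine ⟨a, fun k hk => ?_⟩
    obtain ⟨j, hjim, hj1, hj2⟩ := ha (k + 1) (by omega)
    obtain ⟨m, hmY, rfl⟩ := hjim
    have hfm0 : f m ≠ 0 := by have := hpos k; omega
    have hex : ∃ i, m ∈ X i := by
      by_contra hc
      rw [hf] at hfm0; simp only [dif_neg hc] at hfm0
      exact hfm0 rfl
    have hfm : f m = Nat.find hex + 1 := by rw [hf]; simp only [dif_pos hex]
    refine ⟨m, hmY, Set.mem_biUnion ?_ (Nat.find_spec hex)⟩
    simp only [Set.mem_Ico]
    have := hpos k
    have := hpos (k + 1)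
    omega

lemma impl23
    (h : ∀ X : ℕ → Set ℕ, (⋃ i, X i) ∈ Fplus F → (∀ i, (X i)ᶜ ∈ F) →
      ∃ n : ℕ → ℕ, StrictMono n ∧
        ∀ Y ∈ F, ∀ᶠ k in Filter.atTop,
          (Y ∩ ⋃ i ∈ Set.Ico (n k) (n (k + 1)), X i).Nonempty) :
    ∀ X : ℕ → Set ℕ, (⋃ i, X i) ∈ F → (∀ k, (⋃ i ∈ Set.Iio k, X i) ∉ F) →
      {i | X i ∈ Fplus F}.Finite →
      ∃ n : ℕ → ℕ, StrictMono n ∧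
        ∀ Y ∈ F, ∀ᶠ k in Filter.atTop,
          (Y ∩ ⋃ i ∈ Set.Ico (n k) (n (k + 1)), X i).Nonempty := by
  intro X hU hpart hfin
  classical
  obtain ⟨b, hb⟩ : ∃ b, ∀ i, b ≤ i → (X i)ᶜ ∈ F := by
    obtain ⟨b0, hb0⟩ := hfin.bddAbove
    refine ⟨b0 + 1, fun i hi => ?_⟩
    by_contra hc
    have : i ∈ {i | X i ∈ Fplus F} := hc
    have := hb0 this
    omega
  have hpos : (⋃ i, X (i + b)) ∈ Fplus F := by
    simp only [Fplus, Set.mem_setOf_eq]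
    intro hcompl
    apply hpart b
    refine F.sets_of_superset (Filter.inter_mem hU hcompl) ?_
    rintro m ⟨hm1, hm2⟩
    obtain ⟨j, hj⟩ := Set.mem_iUnion.mp hm1
    rcases lt_or_ge j b with hlt | hge
    · exact Set.mem_biUnion (Set.mem_Iio.mpr hlt) hj
    · exact absurd (Set.mem_iUnion.mpr ⟨j - b, by rwa [Nat.sub_add_cancel hge]⟩) hm2
  obtain ⟨n, hn, hhit⟩ := h (fun i => X (i + b)) hpos (fun i => hb _ (Nat.le_add_left b i))
  refine ⟨fun k => n k + b, fun a b' hab => by show n a + b < n b' + b; have := hn hab; omega, ?_⟩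
  intro Y hY
  filter_upwards [hhit Y hY] with k hk
  obtain ⟨m, hmY, hmU⟩ := hk
  obtain ⟨i, hi, hmX⟩ := Set.mem_iUnion₂.mp hmU
  refine ⟨m, hmY, Set.mem_biUnion ?_ hmX⟩
  simp only [Set.mem_Ico] at hi ⊢
  omega

lemma impl31
    (h : ∀ X : ℕ → Set ℕ, (⋃ i, X i) ∈ F → (∀ k, (⋃ i ∈ Set.Iio k, X i) ∉ F) →
      {i | X i ∈ Fplus F}.Finite →
      ∃ n : ℕ → ℕ, StrictMono n ∧
        ∀ Y ∈ F, ∀ᶠ k in Filter.atTop,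
          (Y ∩ ⋃ i ∈ Set.Ico (n k) (n (k + 1)), X i).Nonempty) :
    HereditarilyMeager F := by
  intro f
  classical
  by_cases hfin : ∃ Y ∈ Filter.map f F, Y.Finite
  · exact Or.inl hfin
  right
  by_cases hP : {i | f ⁻¹' {i} ∈ Fplus F}.Finite
  · have hU : (⋃ i, f ⁻¹' {i}) ∈ F := by
      have : (⋃ i, f ⁻¹' {i}) = Set.univ := by ext m; simp
      rw [this]; exact Filter.univ_mem
    have hpart : ∀ k, (⋃ i ∈ Set.Iio k, f ⁻¹' {i}) ∉ F := by
      intro k hk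
      apply hfin
      refine ⟨Set.Iio k, ?_, Set.finite_Iio k⟩
      rw [Filter.mem_map]
      have : (⋃ i ∈ Set.Iio k, f ⁻¹' {i}) = f ⁻¹' (Set.Iio k) := by ext m; simp
      rwa [this] at hk
    obtain ⟨n, hn, hhit⟩ := h (fun i => f ⁻¹' {i}) hU hpart hP
    apply talagrand_easy _ n hn
    intro Y' hY'
    rw [Filter.mem_map] at hY'
    filter_upwards [hhit _ hY'] with k hk
    obtain ⟨m, hm1, hm2⟩ := hk
    obtain ⟨i, hi, hmX⟩ := Set.mem_iUnion₂.mp hm2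
    have : f m = i := hmX
    exact ⟨f m, hm1, this ▸ hi⟩
  · -- infinitely many positive fibers: every member of the image filter contains them all
    have hPsub : ∀ Y' ∈ Filter.map f F, ∀ i ∈ {i | f ⁻¹' {i} ∈ Fplus F}, i ∈ Y' := by
      intro Y' hY' i hi
      by_contra hiY
      apply hi
      rw [Filter.mem_map] at hY'
      refine F.sets_of_superset hY' ?_
      intro m hm hmI
      apply hiY
      have hfi : f m = i := hmI
      rw [← hfi]
      exact hm
    rw [MeagerFamily, isMeagre_iff_countable_union_isNowhereDense]
    set P := {i | f ⁻¹' {i} ∈ Fplus F} with hPdef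
    set K : Set (ℕ → Bool) := {x | ∀ i ∈ P, x i = true} with hK
    have hKclosed : IsClosed K := by
      have : K = ⋂ i ∈ P, (fun x : ℕ → Bool => x i) ⁻¹' {true} := by
        ext x; simp [hK]
      rw [this]
      exact isClosed_biInter fun i _ =>
        IsClosed.preimage (continuous_apply i) (isClosed_discrete ({true} : Set Bool))
    have hKnwd : IsNowhereDense K := by
      rw [hKclosed.isNowhereDense_iff]
      by_contra hc
      obtain ⟨y, hy⟩ := Set.nonempty_iff_ne_empty.mpr hc
      obtain ⟨q, hq⟩ := cyl_mem_nhds (isOpen_interior.mem_nhds hy)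
      have hPinf : P.Infinite := hP
      obtain ⟨i0, hi0P, hi0q⟩ := hPinf.exists_gt q
      set x : ℕ → Bool := fun i => if i < q then y i else false with hx
      have hxK : x ∈ K := interior_subset (hq x fun i hi => by simp [hx, hi])
      have := hxK i0 hi0P
      simp [hx, show ¬ i0 < q by omega] at this
    refine ⟨{K}, ?_, Set.countable_singleton K, ?_⟩
    · rintro t rfl2
      simp only [Set.mem_singleton_iff] at rfl2
      rw [rfl2]; exact hKnwd
    · rintro x ⟨Y', hY', rfl⟩
      refine Set.mem_sUnion.mpr ⟨K, rfl, fun i hi => chi_eq_true (hPsub Y' hY' i hi)⟩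


end AuxHM

/-- Characterizations of hereditarily meager filters. -/
theorem stmt3 (F : Filter ℕ) (hF : Filter.cofinite ≤ F) :
    List.TFAE [HereditarilyMeager F,
      ∀ X : ℕ → Set ℕ, (⋃ i, X i) ∈ Fplus F → (∀ i, (X i)ᶜ ∈ F) →
        ∃ n : ℕ → ℕ, StrictMono n ∧
          ∀ Y ∈ F, ∀ᶠ k in Filter.atTop,
            (Y ∩ ⋃ i ∈ Set.Ico (n k) (n (k + 1)), X i).Nonempty,
      ∀ X : ℕ → Set ℕ, (⋃ i, X i) ∈ F → (∀ k, (⋃ i ∈ Set.Iio k, X i) ∉ F) →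
        {i | X i ∈ Fplus F}.Finite →
        ∃ n : ℕ → ℕ, StrictMono n ∧
          ∀ Y ∈ F, ∀ᶠ k in Filter.atTop,
            (Y ∩ ⋃ i ∈ Set.Ico (n k) (n (k + 1)), X i).Nonempty] := by
  tfae_have 1 → 2 := impl12 F
  tfae_have 2 → 3 := impl23 F
  tfae_have 3 → 1 := impl31 F
  tfae_finish
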